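/- Let λ₁, λ₂ > 0, ρ > 0, ε₀ > 0, p ∈ [0,1], and β ∈ (0,1) with β > (1−β)ε₀. Set A = ε₀/(ρ(β−(1−β)ε₀)), B = ε₀/(ρ(1−β)), and ζ = max(A,B). Let X₁ ~ Exp(λ₁) and X₂ ~ Exp(λ₂) be independent, and let E be an event independent of (X₁,X₂) with P(E) = p. Define the success event S = {βX₁/((1−β)X₁ + 1/ρ) > ε₀} ∩ {βX₂/((1−β)X₂ + 1/ρ) > ε₀} ∩ {ρ(1−β)W > ε₀}, where W = X₁ on Eᶜ and W = X₂ on E. Then the common outage probability satisfies P(Sᶜ) = 1 − (1−p)·e^{−(λ₂A + λ₁ζ)} − p·e^{−(λ₁A + λ₂ζ)}. -/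

import Mathlib

open MeasureTheory ProbabilityTheory Real Set
open scoped Classical

lemma expMeasure_Iic_toReal {r t : ℝ} (hr : 0 < r) (ht : 0 ≤ t) :
    ((expMeasure r) (Iic t)).toReal = 1 - Real.exp (-(r * t)) := by
  have hprob := isProbabilityMeasure_expMeasure hr
  have h := cdf_expMeasure_eq hr t
  rw [cdf_eq_real, measureReal_def] at h
  rw [h, if_pos ht]

lemma expMeasure_Ioi_toReal {r t : ℝ} (hr : 0 < r) (ht : 0 ≤ t) :
    ((expMeasure r) (Ioi t)).toReal = Real.exp (-(r * t)) := by
  have hprob := isProbabilityMeasure_expMeasure hr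
  rw [← compl_Iic, measure_compl measurableSet_Iic (measure_ne_top _ _), measure_univ,
    ENNReal.toReal_sub_of_le prob_le_one ENNReal.one_ne_top, ENNReal.toReal_one,
    expMeasure_Iic_toReal hr ht]
  ring

lemma expMeasure_Iio_zero {r : ℝ} (hr : 0 < r) : (expMeasure r) (Iio 0) = 0 := by
  have hprob := isProbabilityMeasure_expMeasure hr
  have h0 : ((expMeasure r) (Iic 0)).toReal = 0 := by
    rw [expMeasure_Iic_toReal hr le_rfl]
    simp
  have hIic : (expMeasure r) (Iic 0) = 0 :=
    ((ENNReal.toReal_eq_zero_iff _).1 h0).resolve_right (measure_ne_top _ _)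
  exact measure_mono_null Iio_subset_Iic_self hIic

/-- Proposition 2: the common outage probability of two-user downlink distance-based NOMA.
With independent gains `X₁ ~ Exp(l₁)`, `X₂ ~ Exp(l₂)`, an independent event `E` of probability
`p` (disordered distance estimates), `W = X₁` on `Eᶜ` and `W = X₂` on `E`, power factor `β`
with `β > (1-β)ε₀`, `A = ε₀/(ρ(β-(1-β)ε₀))`, `B = ε₀/(ρ(1-β))`, `ζ = max(A,B)`, the
probability that the success event `S` fails equals
`1 - (1-p) e^{-(l₂A + l₁ζ)} - p e^{-(l₁A + l₂ζ)}`. -/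
theorem downlink_noma_common_outage_probability
    {Ω : Type*} [MeasurableSpace Ω] (P : Measure Ω) [IsProbabilityMeasure P]
    (l₁ l₂ ρ ε₀ p β A B ζ : ℝ) (hl₁ : 0 < l₁) (hl₂ : 0 < l₂) (hρ : 0 < ρ) (hε₀ : 0 < ε₀)
    (hp : p ∈ Set.Icc (0 : ℝ) 1) (hβ : β ∈ Set.Ioo (0 : ℝ) 1) (hβε : (1 - β) * ε₀ < β)
    (hA : A = ε₀ / (ρ * (β - (1 - β) * ε₀))) (hB : B = ε₀ / (ρ * (1 - β)))
    (hζ : ζ = max A B)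
    (X₁ X₂ : Ω → ℝ) (hm1 : Measurable X₁) (hm2 : Measurable X₂)
    (hlaw1 : P.map X₁ = expMeasure l₁) (hlaw2 : P.map X₂ = expMeasure l₂)
    (hind : IndepFun X₁ X₂ P)
    (E : Set Ω) (hE : MeasurableSet E) (hPE : (P E).toReal = p)
    (hindE : Indep (MeasurableSpace.generateFrom {E})
      (MeasurableSpace.comap (fun ω => (X₁ ω, X₂ ω)) inferInstance) P)
    (S : Set Ω)
    (hS : S = {ω | ε₀ < β * X₁ ω / ((1 - β) * X₁ ω + 1 / ρ)} ∩
              {ω | ε₀ < β * X₂ ω / ((1 - β) * X₂ ω + 1 / ρ)} ∩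
              {ω | ε₀ < ρ * (1 - β) * (if ω ∈ E then X₂ ω else X₁ ω)}) :
    (P Sᶜ).toReal =
      1 - (1 - p) * Real.exp (-(l₂ * A + l₁ * ζ)) - p * Real.exp (-(l₁ * A + l₂ * ζ)) := by
  obtain ⟨hβ0, hβ1⟩ := hβ
  have h1β : 0 < 1 - β := by linarith
  have hc : 0 < β - (1 - β) * ε₀ := by linarith
  have hA0 : 0 < A := by rw [hA]; positivity
  have hB0 : 0 < B := by rw [hB]; positivity
  have hζ0 : 0 < ζ := by rw [hζ]; exact lt_max_of_lt_left hA0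
  -- equivalences
  have key1 : ∀ x : ℝ, 0 ≤ x → (ε₀ < β * x / ((1 - β) * x + 1 / ρ) ↔ A < x) := by
    intro x hx
    have hd : 0 < (1 - β) * x + 1 / ρ :=
      add_pos_of_nonneg_of_pos (mul_nonneg h1β.le hx) (by positivity)
    rw [lt_div_iff₀ hd, hA, div_lt_iff₀ (by positivity : 0 < ρ * (β - (1 - β) * ε₀))]
    have hinv : ρ * (1 / ρ) = 1 := mul_one_div_cancel hρ.ne'
    constructor <;> intro h
    · nlinarith [mul_lt_mul_of_pos_left h hρ]
    · nlinarith [mul_lt_mul_of_pos_left h (one_div_pos.mpr hρ),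
        one_div_mul_cancel hρ.ne', one_div_pos.mpr hρ]
  have key2 : ∀ w : ℝ, (ε₀ < ρ * (1 - β) * w ↔ B < w) := by
    intro w
    rw [hB, div_lt_iff₀ (mul_pos hρ h1β),
      show w * (ρ * (1 - β)) = ρ * (1 - β) * w from by ring]
  -- nonnegativity a.e.
  have hX1ae : ∀ᵐ ω ∂P, 0 ≤ X₁ ω := by
    have h0 : P (X₁ ⁻¹' Iio 0) = 0 := by
      rw [← Measure.map_apply hm1 measurableSet_Iio, hlaw1, expMeasure_Iio_zero hl₁]
    refine ae_iff.2 ?_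
    simpa [Set.preimage, not_le] using h0
  have hX2ae : ∀ᵐ ω ∂P, 0 ≤ X₂ ω := by
    have h0 : P (X₂ ⁻¹' Iio 0) = 0 := by
      rw [← Measure.map_apply hm2 measurableSet_Iio, hlaw2, expMeasure_Iio_zero hl₂]
    refine ae_iff.2 ?_
    simpa [Set.preimage, not_le] using h0
  set T₁ : Set Ω := X₁ ⁻¹' Ioi ζ ∩ X₂ ⁻¹' Ioi A with hT₁def
  set T₂ : Set Ω := X₁ ⁻¹' Ioi A ∩ X₂ ⁻¹' Ioi ζ with hT₂def
  have hT₁m : MeasurableSet T₁ := (hm1 measurableSet_Ioi).inter (hm2 measurableSet_Ioi)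
  have hT₂m : MeasurableSet T₂ := (hm1 measurableSet_Ioi).inter (hm2 measurableSet_Ioi)
  -- a.e. identification of S
  have hSae : S =ᵐ[P] ((T₁ ∩ Eᶜ ∪ T₂ ∩ E : Set Ω)) := by
    refine Filter.eventuallyEq_set.2 ?_
    filter_upwards [hX1ae, hX2ae] with ω h1 h2
    subst hS
    by_cases hωE : ω ∈ E
    · simp only [mem_inter_iff, mem_union, mem_setOf_eq, mem_compl_iff, hωE, if_true,
        not_true, and_false, false_or, and_true, hT₁def, hT₂def, mem_preimage, mem_Ioi]
      rw [key1 _ h1, key1 _ h2, key2, hζ]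
      rw [max_lt_iff]
      tauto
    · simp only [mem_inter_iff, mem_union, mem_setOf_eq, mem_compl_iff, hωE, if_false,
        not_false_iff, and_true, and_false, or_false, hT₁def, hT₂def, mem_preimage, mem_Ioi]
      rw [key1 _ h1, key1 _ h2, key2, hζ]
      rw [max_lt_iff]
      tauto
  -- S measurable
  have hSm : MeasurableSet S := by
    rw [hS]
    refine MeasurableSet.inter (MeasurableSet.inter ?_ ?_) ?_
    · exact measurableSet_lt measurable_const
        ((measurable_const.mul hm1).div ((measurable_const.mul hm1).add measurable_const))
    · exact measurableSet_lt measurable_const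
        ((measurable_const.mul hm2).div ((measurable_const.mul hm2).add measurable_const))
    · exact measurableSet_lt measurable_const
        (measurable_const.mul (Measurable.ite hE hm2 hm1))
  -- comap measurability
  have hcomap : ∀ (s t : Set ℝ), MeasurableSet s → MeasurableSet t →
      MeasurableSet[MeasurableSpace.comap (fun ω => (X₁ ω, X₂ ω)) inferInstance]
        (X₁ ⁻¹' s ∩ X₂ ⁻¹' t) := by
    intro s t hs ht
    exact ⟨s ×ˢ t, hs.prod ht, by ext ω; simp [Set.mem_prod]⟩
  have hindE' := (ProbabilityTheory.Indep_iff _ _ _).1 hindE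
  have hEgen : MeasurableSet[MeasurableSpace.generateFrom {E}] E :=
    MeasurableSpace.measurableSet_generateFrom rfl
  -- measure of intersections with E and Eᶜ
  have hPT1 : P (T₁ ∩ Eᶜ) = P Eᶜ * P T₁ := by
    rw [Set.inter_comm]
    exact hindE' _ _ hEgen.compl (hcomap _ _ measurableSet_Ioi measurableSet_Ioi)
  have hPT2 : P (T₂ ∩ E) = P E * P T₂ := by
    rw [Set.inter_comm]
    exact hindE' _ _ hEgen (hcomap _ _ measurableSet_Ioi measurableSet_Ioi)
  -- marginals
  have hmarg1 : ∀ t : ℝ, 0 ≤ t → (P (X₁ ⁻¹' Ioi t)).toReal = Real.exp (-(l₁ * t)) := by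
    intro t ht
    rw [← Measure.map_apply hm1 measurableSet_Ioi, hlaw1, expMeasure_Ioi_toReal hl₁ ht]
  have hmarg2 : ∀ t : ℝ, 0 ≤ t → (P (X₂ ⁻¹' Ioi t)).toReal = Real.exp (-(l₂ * t)) := by
    intro t ht
    rw [← Measure.map_apply hm2 measurableSet_Ioi, hlaw2, expMeasure_Ioi_toReal hl₂ ht]
  have hprodT1 : (P T₁).toReal = Real.exp (-(l₁ * ζ)) * Real.exp (-(l₂ * A)) := by
    rw [hT₁def, hind.measure_inter_preimage_eq_mul _ _ measurableSet_Ioi measurableSet_Ioi,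
      ENNReal.toReal_mul, hmarg1 _ hζ0.le, hmarg2 _ hA0.le]
  have hprodT2 : (P T₂).toReal = Real.exp (-(l₁ * A)) * Real.exp (-(l₂ * ζ)) := by
    rw [hT₂def, hind.measure_inter_preimage_eq_mul _ _ measurableSet_Ioi measurableSet_Ioi,
      ENNReal.toReal_mul, hmarg1 _ hA0.le, hmarg2 _ hζ0.le]
  -- probability of E and Eᶜ
  have hPEc : (P Eᶜ).toReal = 1 - p := by
    rw [measure_compl hE (measure_ne_top _ _), measure_univ,
      ENNReal.toReal_sub_of_le prob_le_one ENNReal.one_ne_top, ENNReal.toReal_one, hPE]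
  -- assemble P S
  have hdisj : Disjoint (T₁ ∩ Eᶜ) (T₂ ∩ E) :=
    Disjoint.mono inter_subset_right inter_subset_right disjoint_compl_left
  have hPS : (P S).toReal
      = (1 - p) * (Real.exp (-(l₁ * ζ)) * Real.exp (-(l₂ * A)))
        + p * (Real.exp (-(l₁ * A)) * Real.exp (-(l₂ * ζ))) := by
    rw [measure_congr hSae, measure_union hdisj (hT₂m.inter hE),
      ENNReal.toReal_add (measure_ne_top _ _) (measure_ne_top _ _),
      hPT1, hPT2, ENNReal.toReal_mul, ENNReal.toReal_mul, hPEc, hPE, hprodT1, hprodT2]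
  have hcompl : (P Sᶜ).toReal = 1 - (P S).toReal := by
    rw [measure_compl hSm (measure_ne_top _ _), measure_univ,
      ENNReal.toReal_sub_of_le prob_le_one ENNReal.one_ne_top, ENNReal.toReal_one]
  rw [hcompl, hPS, ← Real.exp_add, ← Real.exp_add]
  ring_nf
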